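/- Let N ≥ 1, let λ_1,…,λ_N be pairwise distinct positive reals, c_1,…,c_N positive reals, and (δ^{(n)})_{n≥0} a real sequence with δ^{(n)} > −min_j λ_j for all n, converging to a limit δ* satisfying 1 + δ*/λ_1 > 1 + δ*/λ_2 > ⋯ > 1 + δ*/λ_N > 0. Define moments μ_i^{(s,n)} := Σ_{j=1}^N c_j λ_j^{i+s} Π_{ℓ=0}^{n−1} (λ_j + δ^{(ℓ)}), Hankel determinants τ_0^{(s,n)} := 1, τ_i^{(s,n)} := det(μ_{j+k}^{(s,n)})_{j,k=0}^{i−1}, and set p_i^{(n)} := τ_i^{(−n,n)} τ_{i−1}^{(−n+1,n+1)} / (τ_{i−1}^{(−n,n+1)} τ_i^{(−n+1,n)}) and x_i^{(n)} := log( τ_i^{(−n,n)} τ_{i−1}^{(−n,n+1)} / (τ_{i−1}^{(−n+1,n)} τ_{i−1}^{(−n+1,n+1)}) ) for i = 1,…,N. Then: (a) lim_{n→∞} p_i^{(n)} = 1/λ_i for i = 1,…,N; (b) lim_{n→∞} (x_i^{(n+1)} − x_i^{(n)}) = log(1 + δ*/λ_i) for i = 1,…,N; (c) x_{i+1}^{(n)}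 − x_i^{(n)} → −∞ as n → ∞, for i = 1,…,N−1. -/

import Mathlib

open Finset Filter

/-- Moments μ_i^{(s,n)} := Σ_{j=1}^N c_j λ_j^{i+s} Π_{ℓ=0}^{n−1}(λ_j + δ^{(ℓ)}). -/
noncomputable def mom (N : ℕ) (lam c : ℕ → ℝ) (δ : ℕ → ℝ) (i : ℕ) (s : ℤ) (n : ℕ) : ℝ :=
  ∑ j ∈ Finset.Icc 1 N, c j * lam j ^ ((i : ℤ) + s) * ∏ l ∈ Finset.range n, (lam j + δ l)

/-- Hankel determinants τ_i^{(s,n)}. -/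
noncomputable def tauH (N : ℕ) (lam c : ℕ → ℝ) (δ : ℕ → ℝ) (i : ℕ) (s : ℤ) (n : ℕ) : ℝ :=
  Matrix.det (Matrix.of fun j k : Fin i => mom N lam c δ (j.1 + k.1) s n)

/-- p_i^{(n)} := τ_i^{(−n,n)} τ_{i−1}^{(−n+1,n+1)} / (τ_{i−1}^{(−n,n+1)} τ_i^{(−n+1,n)}). -/
noncomputable def pn (N : ℕ) (lam c : ℕ → ℝ) (δ : ℕ → ℝ) (i n : ℕ) : ℝ :=
  tauH N lam c δ i (-(n : ℤ)) n * tauH N lam c δ (i - 1) (-(n : ℤ) + 1) (n + 1) /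
    (tauH N lam c δ (i - 1) (-(n : ℤ)) (n + 1) * tauH N lam c δ i (-(n : ℤ) + 1) n)

/-- x_i^{(n)} := log( τ_i^{(−n,n)} τ_{i−1}^{(−n,n+1)} / (τ_{i−1}^{(−n+1,n)} τ_{i−1}^{(−n+1,n+1)}) ). -/
noncomputable def xn (N : ℕ) (lam c : ℕ → ℝ) (δ : ℕ → ℝ) (i n : ℕ) : ℝ :=
  Real.log (tauH N lam c δ i (-(n : ℤ)) n * tauH N lam c δ (i - 1) (-(n : ℤ)) (n + 1) /
    (tauH N lam c δ (i - 1) (-(n : ℤ) + 1) n * tauH N lam c δ (i - 1) (-(n : ℤ) + 1) (n + 1)))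

open Matrix

lemma hankel_expand (i : ℕ) (lam w : ℕ → ℝ) (J : Finset ℕ) :
    Matrix.det (Matrix.of fun a b : Fin i => ∑ j ∈ J, w j * lam j ^ (a.1 + b.1)) =
    ∑ r ∈ Fintype.piFinset (fun _ : Fin i => J),
      (∏ a : Fin i, w (r a) * lam (r a) ^ a.1) *
        ∏ a : Fin i, ∏ b ∈ Finset.Ioi a, (lam (r b) - lam (r a)) := by
  set f := (Matrix.detRowAlternating (R := ℝ) (n := Fin i)).toMultilinearMap with hf
  have h1 : Matrix.det (Matrix.of fun a b : Fin i => ∑ j ∈ J, w j * lam j ^ (a.1 + b.1))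
      = f (fun a : Fin i => ∑ j ∈ J,
          (fun (a' : Fin i) (j : ℕ) => (w j * lam j ^ a'.1) • (fun b : Fin i => lam j ^ b.1)) a j) := by
    have key : (Matrix.of fun a b : Fin i => ∑ j ∈ J, w j * lam j ^ (a.1 + b.1)) =
        fun a : Fin i => ∑ j ∈ J, (w j * lam j ^ a.1) • (fun b : Fin i => lam j ^ b.1) := by
      ext a b
      simp [pow_add, mul_assoc, Finset.sum_apply]
    rw [key]; rfl
  rw [h1, f.map_sum_finset]
  refine Finset.sum_congr rfl fun r _ => ?_
  have h2 := f.map_smul_univ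
    (fun a : Fin i => w (r a) * lam (r a) ^ a.1)
    (fun a : Fin i => (fun b : Fin i => lam (r a) ^ b.1))
  rw [h2]
  have hv : f (fun a : Fin i => (fun b : Fin i => lam (r a) ^ b.1))
      = Matrix.det (Matrix.vandermonde (fun a : Fin i => lam (r a))) := rfl
  rw [smul_eq_mul, hv, Matrix.det_vandermonde]

/-- Positivity of Hankel determinants with positive weights and distinct positive nodes. -/
lemma hankel_det_pos (M i : ℕ) (hi : i ≤ M) (lam w : ℕ → ℝ)
    (hlampos : ∀ j ∈ Finset.Icc 1 M, 0 < lam j)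
    (hdist : ∀ j ∈ Finset.Icc 1 M, ∀ k ∈ Finset.Icc 1 M, j ≠ k → lam j ≠ lam k)
    (hw : ∀ j ∈ Finset.Icc 1 M, 0 < w j) :
    0 < Matrix.det (Matrix.of fun a b : Fin i => ∑ j ∈ Finset.Icc 1 M, w j * lam j ^ (a.1 + b.1)) := by
  set A := (Matrix.of fun a b : Fin i => ∑ j ∈ Finset.Icc 1 M, w j * lam j ^ (a.1 + b.1)) with hA
  have hM : 1 ≤ M ∨ i = 0 := by omega
  refine Matrix.PosDef.det_pos (A := A) (𝕜 := ℝ) ?_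
  refine Matrix.PosDef.of_dotProduct_mulVec_pos ?_ ?_
  · ext a b
    simp only [hA, Matrix.conjTranspose_apply, Matrix.of_apply, starRingEnd_apply, star_trivial]
    exact Finset.sum_congr rfl fun j _ => by rw [Nat.add_comm a.1 b.1]
  · intro x hx
    have hq : dotProduct (star x) (A *ᵥ x)
        = ∑ j ∈ Finset.Icc 1 M, w j * (∑ a : Fin i, x a * lam j ^ a.1) ^ 2 := by
      calc dotProduct (star x) (A *ᵥ x)
          = ∑ a : Fin i, ∑ b : Fin i, ∑ j ∈ Finset.Icc 1 M,
              x a * ((w j * lam j ^ (a.1 + b.1)) * x b) := by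
            simp only [dotProduct, Matrix.mulVec, Matrix.of_apply, star_trivial, hA]
            refine Finset.sum_congr rfl fun a _ => ?_
            rw [Finset.mul_sum]
            refine Finset.sum_congr rfl fun b _ => ?_
            rw [Finset.sum_mul, Finset.mul_sum]
        _ = ∑ j ∈ Finset.Icc 1 M, ∑ a : Fin i, ∑ b : Fin i,
              x a * ((w j * lam j ^ (a.1 + b.1)) * x b) := by
            rw [show (∑ a : Fin i, ∑ b : Fin i, ∑ j ∈ Finset.Icc 1 M,
                x a * ((w j * lam j ^ (a.1 + b.1)) * x b))
              = ∑ a : Fin i, ∑ j ∈ Finset.Icc 1 M, ∑ b : Fin i,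
                x a * ((w j * lam j ^ (a.1 + b.1)) * x b) from
              Finset.sum_congr rfl fun a _ => Finset.sum_comm]
            exact Finset.sum_comm
        _ = ∑ j ∈ Finset.Icc 1 M, w j * (∑ a : Fin i, x a * lam j ^ a.1) ^ 2 := by
            refine Finset.sum_congr rfl fun j _ => ?_
            rw [sq, Finset.sum_mul_sum, Finset.mul_sum]
            refine Finset.sum_congr rfl fun a _ => ?_
            rw [Finset.mul_sum]
            refine Finset.sum_congr rfl fun b _ => ?_
            rw [pow_add]
            ring
    rw [hq]
    have hnonneg : ∀ j ∈ Finset.Icc 1 M, 0 ≤ w j * (∑ a : Fin i, x a * lam j ^ a.1) ^ 2 :=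
      fun j hj => mul_nonneg (hw j hj).le (sq_nonneg _)
    refine Finset.sum_pos' hnonneg ?_
    by_contra hcon
    push_neg at hcon
    have hzero : ∀ j ∈ Finset.Icc 1 M, (∑ a : Fin i, x a * lam j ^ a.1) = 0 := by
      intro j hj
      have := hcon j hj
      have h2 := mul_nonneg (hw j hj).le (sq_nonneg (∑ a : Fin i, x a * lam j ^ a.1))
      have : w j * (∑ a : Fin i, x a * lam j ^ a.1) ^ 2 = 0 := le_antisymm this h2
      have := (mul_eq_zero.1 this).resolve_left (hw j hj).ne'
      exact (pow_eq_zero_iff two_ne_zero).1 this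
    -- build vandermonde
    have hmem : ∀ a : Fin i, a.1 + 1 ∈ Finset.Icc 1 M := by
      intro a; simp only [Finset.mem_Icc]; omega
    set v : Fin i → ℝ := fun a => lam (a.1 + 1) with hv
    have hdet : (Matrix.vandermonde v).det ≠ 0 := by
      rw [Matrix.det_vandermonde]
      refine Finset.prod_ne_zero_iff.2 fun a _ => Finset.prod_ne_zero_iff.2 fun b hb => ?_
      have hab : a < b := Finset.mem_Ioi.1 hb
      have : lam (b.1 + 1) ≠ lam (a.1 + 1) :=
        hdist _ (hmem b) _ (hmem a) (by simpa using fun h => absurd (Fin.ext (by omega)) hab.ne')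
      exact sub_ne_zero.2 this
    have hmv : (Matrix.vandermonde v) *ᵥ x = 0 := by
      funext a
      have := hzero (a.1 + 1) (hmem a)
      simpa [Matrix.mulVec, dotProduct, Matrix.vandermonde, mul_comm] using this
    exact absurd (Matrix.eq_zero_of_mulVec_eq_zero hdet hmv) hx

/-- If `f n > 0` and `f n → r < 1`, then `∏_{l<n} f l → 0`. -/
lemma prod_tendsto_zero (f : ℕ → ℝ) (hf : ∀ n, 0 < f n) (r : ℝ) (hr : r < 1)
    (h : Tendsto f atTop (nhds r)) :
    Tendsto (fun n => ∏ l ∈ Finset.range n, f l) atTop (nhds 0) := by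
  have hr0 : 0 ≤ r := ge_of_tendsto' h fun n => (hf n).le
  set ρ : ℝ := (r + 1) / 2 with hρ
  have hρ0 : 0 ≤ ρ := by positivity
  have hρ1 : ρ < 1 := by rw [hρ]; linarith
  have hev : ∀ᶠ n in atTop, f n < ρ := h.eventually_lt_const (by rw [hρ]; linarith)
  obtain ⟨n₀, hn₀⟩ := eventually_atTop.1 hev
  have hbound : ∀ n, n₀ ≤ n → (∏ l ∈ Finset.range n, f l)
      ≤ (∏ l ∈ Finset.range n₀, f l) * ρ ^ (n - n₀) := by
    intro n hn
    rw [← Finset.prod_range_mul_prod_Ico f hn]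
    refine mul_le_mul_of_nonneg_left ?_ (Finset.prod_nonneg fun l _ => (hf l).le)
    calc ∏ l ∈ Finset.Ico n₀ n, f l ≤ ∏ l ∈ Finset.Ico n₀ n, ρ := by
          refine Finset.prod_le_prod (fun l _ => (hf l).le) fun l hl => ?_
          exact (hn₀ l (Finset.mem_Ico.1 hl).1).le
      _ = ρ ^ (n - n₀) := by rw [Finset.prod_const, Nat.card_Ico]
  have htop : Tendsto (fun n : ℕ => (∏ l ∈ Finset.range n₀, f l) * ρ ^ (n - n₀)) atTop (nhds 0) := by
    have h1 : Tendsto (fun k : ℕ => ρ ^ k) atTop (nhds 0) :=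
      tendsto_pow_atTop_nhds_zero_of_lt_one hρ0 hρ1
    have h2 : Tendsto (fun n : ℕ => n - n₀) atTop atTop := tendsto_sub_atTop_nat n₀
    have := (h1.comp h2).const_mul (∏ l ∈ Finset.range n₀, f l)
    simpa using this
  refine squeeze_zero' ?_ (eventually_atTop.2 ⟨n₀, hbound⟩) htop
  exact Eventually.of_forall fun n => Finset.prod_nonneg fun l _ => (hf l).le

/-- Strictly decreasing positive weights: subsets of size `i` have product at most
that of `{1,…,i}`, strictly if different. -/
lemma prod_subset_lt (N : ℕ) (q : ℕ → ℝ)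
    (hpos : ∀ j, 1 ≤ j → j ≤ N → 0 < q j)
    (hstrict : ∀ j k, 1 ≤ j → j < k → k ≤ N → q k < q j) :
    ∀ i (S : Finset ℕ), S ⊆ Finset.Icc 1 N → S.card = i →
      (∏ j ∈ S, q j) ≤ (∏ j ∈ Finset.Icc 1 i, q j) ∧
      (S ≠ Finset.Icc 1 i → (∏ j ∈ S, q j) < ∏ j ∈ Finset.Icc 1 i, q j) := by
  have hmono : ∀ j k, 1 ≤ j → j ≤ k → k ≤ N → q k ≤ q j := by
    intro j k hj hjk hk
    rcases eq_or_lt_of_le hjk with h | h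
    · rw [h]
    · exact (hstrict j k hj h hk).le
  intro i
  induction i with
  | zero =>
    intro S hS hcard
    have : S = ∅ := Finset.card_eq_zero.1 hcard
    subst this
    simp
  | succ i ih =>
    intro S hS hcard
    have hne : S.Nonempty := Finset.card_pos.1 (by omega)
    set m := S.max' hne with hm
    have hmS : m ∈ S := S.max'_mem hne
    have hm1 : 1 ≤ m := (Finset.mem_Icc.1 (hS hmS)).1
    have hmN : m ≤ N := (Finset.mem_Icc.1 (hS hmS)).2
    have hSsub : S ⊆ Finset.Icc 1 m := by
      intro x hx
      exact Finset.mem_Icc.2 ⟨(Finset.mem_Icc.1 (hS hx)).1, S.le_max' x hx⟩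
    have hcardle : i + 1 ≤ m := by
      have := Finset.card_le_card hSsub
      simpa [Nat.card_Icc, hcard] using this
    set S' := S.erase m with hS'
    have hS'sub : S' ⊆ Finset.Icc 1 N := (Finset.erase_subset _ _).trans hS
    have hS'card : S'.card = i := by
      rw [hS', Finset.card_erase_of_mem hmS, hcard]; omega
    obtain ⟨hle, hlt⟩ := ih S' hS'sub hS'card
    have hprodS : (∏ j ∈ S, q j) = q m * ∏ j ∈ S', q j :=
      (Finset.mul_prod_erase S q hmS).symm
    have hprodI : (∏ j ∈ Finset.Icc 1 (i + 1), q j) = (∏ j ∈ Finset.Icc 1 i, q j) * q (i + 1) :=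
      Finset.prod_Icc_succ_top (by omega) q
    have hS'pos : 0 < ∏ j ∈ S', q j :=
      Finset.prod_pos fun j hj => hpos j (Finset.mem_Icc.1 (hS'sub hj)).1 (Finset.mem_Icc.1 (hS'sub hj)).2
    have hIpos : 0 < ∏ j ∈ Finset.Icc 1 i, q j :=
      Finset.prod_pos fun j hj => hpos j (Finset.mem_Icc.1 hj).1 (by
        have := (Finset.mem_Icc.1 hj).2; omega)
    have hqm : q m ≤ q (i + 1) := hmono (i + 1) m (by omega) hcardle hmN
    have hq1pos : 0 < q (i + 1) := hpos (i + 1) (by omega) (by omega)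
    constructor
    · rw [hprodS, hprodI, mul_comm (∏ j ∈ Finset.Icc 1 i, q j) (q (i+1))]
      exact mul_le_mul hqm hle hS'pos.le hq1pos.le
    · intro hne'
      rw [hprodS, hprodI, mul_comm (∏ j ∈ Finset.Icc 1 i, q j) (q (i+1))]
      have hqmpos : 0 < q m := hpos m hm1 hmN
      rcases eq_or_lt_of_le hcardle with hmeq | hmlt
      · -- m = i + 1, so S' ≠ Icc 1 i
        have hS'ne : S' ≠ Finset.Icc 1 i := by
          intro hcontra
          apply hne'
          rw [← Finset.insert_erase hmS, ← hS', hcontra, ← hmeq]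
          ext x
          simp only [Finset.mem_insert, Finset.mem_Icc]
          omega
        calc q m * ∏ j ∈ S', q j < q m * ∏ j ∈ Finset.Icc 1 i, q j :=
              mul_lt_mul_of_pos_left (hlt hS'ne) hqmpos
          _ ≤ q (i+1) * ∏ j ∈ Finset.Icc 1 i, q j :=
              mul_le_mul_of_nonneg_right hqm hIpos.le
      · -- m > i + 1
        have hqq : q m < q (i + 1) := hstrict (i + 1) m (by omega) hmlt hmN
        calc q m * ∏ j ∈ S', q j < q (i+1) * ∏ j ∈ S', q j :=
              mul_lt_mul_of_pos_right hqq hS'pos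
          _ ≤ q (i+1) * ∏ j ∈ Finset.Icc 1 i, q j :=
              mul_le_mul_of_nonneg_left hle hq1pos.le

noncomputable def Qp (lam δ : ℕ → ℝ) (j n : ℕ) : ℝ :=
  ∏ l ∈ Finset.range n, (1 + δ l / lam j)

noncomputable def GG (lam δ : ℕ → ℝ) (i n : ℕ) : ℝ :=
  ∏ j ∈ Finset.Icc 1 i, Qp lam δ j n

noncomputable def KK (lam c : ℕ → ℝ) (i m : ℕ) : ℝ :=
  Matrix.det (Matrix.of fun a b : Fin i =>
    ∑ j ∈ Finset.Icc 1 i, (c j * lam j ^ m) * lam j ^ (a.1 + b.1))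

lemma vd_eq_zero_of_not_inj {i : ℕ} (lam : ℕ → ℝ) (r : Fin i → ℕ)
    (h : ¬ Function.Injective r) :
    (∏ a : Fin i, ∏ b ∈ Finset.Ioi a, (lam (r b) - lam (r a))) = 0 := by
  rw [Function.not_injective_iff] at h
  obtain ⟨a, b, hab, hne⟩ := h
  rcases lt_or_gt_of_ne hne with h1 | h1
  · exact Finset.prod_eq_zero (Finset.mem_univ a)
      (Finset.prod_eq_zero (Finset.mem_Ioi.2 h1) (by rw [hab]; ring))
  · exact Finset.prod_eq_zero (Finset.mem_univ b)
      (Finset.prod_eq_zero (Finset.mem_Ioi.2 h1) (by rw [hab]; ring))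

lemma inj_of_image_eq {i : ℕ} (r : Fin i → ℕ)
    (h : Finset.image r Finset.univ = Finset.Icc 1 i) : Function.Injective r := by
  have hcard : (Finset.image r Finset.univ).card = (Finset.univ : Finset (Fin i)).card := by
    rw [h]; simp [Nat.card_Icc]
  have hInj := Finset.card_image_iff.1 hcard
  intro x y hxy
  exact hInj (Finset.mem_coe.2 (Finset.mem_univ x)) (Finset.mem_coe.2 (Finset.mem_univ y)) hxy

lemma prod_comp_inj {i : ℕ} (r : Fin i → ℕ) (hinj : Function.Injective r) (f : ℕ → ℝ) :
    (∏ a : Fin i, f (r a)) = ∏ j ∈ Finset.image r Finset.univ, f j :=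
  (Finset.prod_image fun x _ y _ h => hinj h).symm

lemma KK_scale (lam c : ℕ → ℝ) (i m : ℕ) :
    KK lam c i m = (∏ j ∈ Finset.Icc 1 i, lam j ^ m) * KK lam c i 0 := by
  rw [KK, KK, hankel_expand i lam (fun j => c j * lam j ^ m),
    hankel_expand i lam (fun j => c j * lam j ^ 0), Finset.mul_sum]
  refine Finset.sum_congr rfl fun r hr => ?_
  by_cases hinj : Function.Injective r
  · have himg : Finset.image r Finset.univ = Finset.Icc 1 i := by
      apply Finset.eq_of_subset_of_card_le
      · intro x hx
        obtain ⟨a, _, rfl⟩ := Finset.mem_image.1 hx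
        exact (Fintype.mem_piFinset.1 hr) a
      · rw [Finset.card_image_of_injective _ hinj]
        simp [Nat.card_Icc]
    have hfac : (∏ a : Fin i, (c (r a) * lam (r a) ^ m) * lam (r a) ^ a.1)
        = (∏ j ∈ Finset.Icc 1 i, lam j ^ m) *
            ∏ a : Fin i, (c (r a) * lam (r a) ^ 0) * lam (r a) ^ a.1 := by
      calc (∏ a : Fin i, (c (r a) * lam (r a) ^ m) * lam (r a) ^ a.1)
          = ∏ a : Fin i, (lam (r a) ^ m * ((c (r a) * lam (r a) ^ 0) * lam (r a) ^ a.1)) :=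
            Finset.prod_congr rfl fun a _ => by ring
        _ = (∏ a : Fin i, lam (r a) ^ m) *
              ∏ a : Fin i, (c (r a) * lam (r a) ^ 0) * lam (r a) ^ a.1 :=
            Finset.prod_mul_distrib
        _ = _ := by rw [prod_comp_inj r hinj (fun j => lam j ^ m), himg]
    rw [hfac]; ring
  · rw [vd_eq_zero_of_not_inj lam r hinj]; ring

lemma KK_pos (N : ℕ) (lam c : ℕ → ℝ) (i m : ℕ) (hi : i ≤ N)
    (hlampos : ∀ j ∈ Finset.Icc 1 N, 0 < lam j)
    (hdist : ∀ j ∈ Finset.Icc 1 N, ∀ k ∈ Finset.Icc 1 N, j ≠ k → lam j ≠ lam k)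
    (hcpos : ∀ j ∈ Finset.Icc 1 N, 0 < c j) : 0 < KK lam c i m := by
  have hsub : Finset.Icc 1 i ⊆ Finset.Icc 1 N :=
    Finset.Icc_subset_Icc le_rfl hi
  exact hankel_det_pos i i le_rfl lam (fun j => c j * lam j ^ m)
    (fun j hj => hlampos j (hsub hj))
    (fun j hj k hk => hdist j (hsub hj) k (hsub hk))
    (fun j hj => mul_pos (hcpos j (hsub hj)) (pow_pos (hlampos j (hsub hj)) m))
lemma nu_tendsto (N : ℕ) (lam c : ℕ → ℝ) (δ : ℕ → ℝ) (δs : ℝ)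
    (hlampos : ∀ j ∈ Finset.Icc 1 N, 0 < lam j)
    (hcpos : ∀ j ∈ Finset.Icc 1 N, 0 < c j)
    (hδmin : ∀ n : ℕ, ∀ j ∈ Finset.Icc 1 N, -lam j < δ n)
    (hδlim : Tendsto δ atTop (nhds δs))
    (hchain : ∀ j, 1 ≤ j → j < N → 1 + δs / lam (j + 1) < 1 + δs / lam j)
    (hlast : 0 < 1 + δs / lam N)
    (i t u : ℕ) (hi : i ≤ N) :
    Tendsto (fun n : ℕ => tauH N lam c δ i (-(n : ℤ) + t) (n + u) / GG lam δ i (n + u))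
      atTop (nhds (KK lam c i (t + u))) := by
  classical
  set qf : ℕ → ℝ := fun j => 1 + δs / lam j with hqf
  -- monotonicity of qf
  have hqmono : ∀ j k, 1 ≤ j → j ≤ k → k ≤ N → qf k ≤ qf j := by
    intro j k hj hjk
    induction k, hjk using Nat.le_induction with
    | base => intro _; exact le_rfl
    | succ k hk ih =>
      intro hkN
      exact le_trans (hchain k (by omega) (by omega)).le (ih (by omega))
  have hqpos : ∀ j, 1 ≤ j → j ≤ N → 0 < qf j := fun j hj hjN =>
    lt_of_lt_of_le hlast (hqmono j N hj hjN le_rfl)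
  have hqstrict : ∀ j k, 1 ≤ j → j < k → k ≤ N → qf k < qf j := fun j k hj hjk hkN =>
    lt_of_le_of_lt (hqmono (j + 1) k (by omega) (by omega) hkN) (hchain j hj (by omega))
  -- positivity of factors
  have hfacpos : ∀ (l : ℕ) (j : ℕ), j ∈ Finset.Icc 1 N → 0 < 1 + δ l / lam j := by
    intro l j hj
    have hlamj := hlampos j hj
    have hdl := hδmin l j hj
    have hrw : 1 + δ l / lam j = (lam j + δ l) / lam j := by
      rw [add_div, div_self hlamj.ne']
    rw [hrw]
    exact div_pos (by linarith) hlamj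
  have hQppos : ∀ j ∈ Finset.Icc 1 N, ∀ n, 0 < Qp lam δ j n := fun j hj n =>
    Finset.prod_pos fun l _ => hfacpos l j hj
  have hGGpos : ∀ n, 0 < GG lam δ i n := fun n =>
    Finset.prod_pos fun j hj => hQppos j (Finset.Icc_subset_Icc le_rfl hi hj) n
  -- Step A: expansion of tauH
  have htau : ∀ n : ℕ, tauH N lam c δ i (-(n : ℤ) + t) (n + u)
      = ∑ r ∈ Fintype.piFinset (fun _ : Fin i => Finset.Icc 1 N),
          (∏ a : Fin i, (c (r a) * lam (r a) ^ (t + u) * Qp lam δ (r a) (n + u)) * lam (r a) ^ a.1) *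
            ∏ a : Fin i, ∏ b ∈ Finset.Ioi a, (lam (r b) - lam (r a)) := by
    intro n
    rw [tauH]
    have hmat : (Matrix.of fun a b : Fin i => mom N lam c δ (a.1 + b.1) (-(n : ℤ) + t) (n + u))
        = Matrix.of fun a b : Fin i => ∑ j ∈ Finset.Icc 1 N,
            (c j * lam j ^ (t + u) * Qp lam δ j (n + u)) * lam j ^ (a.1 + b.1) := by
      ext a b
      simp only [Matrix.of_apply, mom]
      refine Finset.sum_congr rfl fun j hj => ?_
      have hlamj : (0 : ℝ) < lam j := hlampos j hj
      have hprod : (∏ l ∈ Finset.range (n + u), (lam j + δ l))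
          = lam j ^ (n + u) * Qp lam δ j (n + u) := by
        rw [Qp]
        calc (∏ l ∈ Finset.range (n + u), (lam j + δ l))
            = ∏ l ∈ Finset.range (n + u), lam j * (1 + δ l / lam j) :=
              Finset.prod_congr rfl fun l _ => by field_simp
          _ = (∏ _l ∈ Finset.range (n + u), lam j) *
                ∏ l ∈ Finset.range (n + u), (1 + δ l / lam j) := Finset.prod_mul_distrib
          _ = _ := by rw [Finset.prod_const, Finset.card_range]
      rw [hprod]
      have hzp : lam j ^ (((a.1 + b.1 : ℕ) : ℤ) + (-(n : ℤ) + t)) * lam j ^ (n + u)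
          = lam j ^ (t + u) * lam j ^ (a.1 + b.1) := by
        rw [← zpow_natCast (lam j) (n + u), ← zpow_natCast (lam j) (t + u),
          ← zpow_natCast (lam j) (a.1 + b.1), ← zpow_add₀ hlamj.ne', ← zpow_add₀ hlamj.ne']
        congr 1
        push_cast
        ring
      calc c j * lam j ^ (((a.1 + b.1 : ℕ) : ℤ) + (-(n : ℤ) + t)) *
            (lam j ^ (n + u) * Qp lam δ j (n + u))
          = (lam j ^ (((a.1 + b.1 : ℕ) : ℤ) + (-(n : ℤ) + t)) * lam j ^ (n + u)) *
              (c j * Qp lam δ j (n + u)) := by ring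
        _ = (lam j ^ (t + u) * lam j ^ (a.1 + b.1)) * (c j * Qp lam δ j (n + u)) := by rw [hzp]
        _ = _ := by ring
    rw [hmat, hankel_expand i lam (fun j => c j * lam j ^ (t + u) * Qp lam δ j (n + u))]
  -- normalized terms
  set E : (Fin i → ℕ) → ℝ := fun r =>
    (∏ a : Fin i, (c (r a) * lam (r a) ^ (t + u)) * lam (r a) ^ a.1) *
      ∏ a : Fin i, ∏ b ∈ Finset.Ioi a, (lam (r b) - lam (r a)) with hE
  set L : (Fin i → ℕ) → ℝ := fun r =>
    if Finset.image r Finset.univ = Finset.Icc 1 i then E r else 0 with hL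
  have hfun : ∀ n : ℕ, tauH N lam c δ i (-(n : ℤ) + t) (n + u) / GG lam δ i (n + u)
      = ∑ r ∈ Fintype.piFinset (fun _ : Fin i => Finset.Icc 1 N),
          E r * ((∏ a : Fin i, Qp lam δ (r a) (n + u)) / GG lam δ i (n + u)) := by
    intro n
    rw [htau n, Finset.sum_div]
    refine Finset.sum_congr rfl fun r _ => ?_
    have hsplit : (∏ a : Fin i, (c (r a) * lam (r a) ^ (t + u) * Qp lam δ (r a) (n + u)) *
          lam (r a) ^ a.1)
        = (∏ a : Fin i, (c (r a) * lam (r a) ^ (t + u)) * lam (r a) ^ a.1) *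
            ∏ a : Fin i, Qp lam δ (r a) (n + u) := by
      rw [← Finset.prod_mul_distrib]
      exact Finset.prod_congr rfl fun a _ => by ring
    rw [hsplit, hE]
    ring
  have hmain : Tendsto (fun n : ℕ => ∑ r ∈ Fintype.piFinset (fun _ : Fin i => Finset.Icc 1 N),
      E r * ((∏ a : Fin i, Qp lam δ (r a) (n + u)) / GG lam δ i (n + u))) atTop
      (nhds (∑ r ∈ Fintype.piFinset (fun _ : Fin i => Finset.Icc 1 N), L r)) := by
    refine tendsto_finset_sum _ fun r hr => ?_
    have hrmem : ∀ a, r a ∈ Finset.Icc 1 N := Fintype.mem_piFinset.1 hr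
    by_cases himg : Finset.image r Finset.univ = Finset.Icc 1 i
    · -- ratio is identically 1
      have hinj := inj_of_image_eq r himg
      have hratio : ∀ n' : ℕ, (∏ a : Fin i, Qp lam δ (r a) n') = GG lam δ i n' := by
        intro n'
        rw [prod_comp_inj r hinj (fun j => Qp lam δ j n'), himg, GG]
      have heq : (fun n : ℕ => E r * ((∏ a : Fin i, Qp lam δ (r a) (n + u)) / GG lam δ i (n + u)))
          = fun _ : ℕ => E r := by
        funext n
        rw [hratio (n + u), div_self (hGGpos (n + u)).ne', mul_one]
      rw [heq, hL]
      simp only [himg, if_pos]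
      exact tendsto_const_nhds
    · by_cases hVd : (∏ a : Fin i, ∏ b ∈ Finset.Ioi a, (lam (r b) - lam (r a))) = 0
      · have hE0 : E r = 0 := by rw [hE]; simp [hVd]
        have heq : (fun n : ℕ => E r * ((∏ a : Fin i, Qp lam δ (r a) (n + u)) / GG lam δ i (n + u)))
            = fun _ : ℕ => (0 : ℝ) := by
          funext n; rw [hE0, zero_mul]
        rw [heq, hL]
        simp only [himg, if_neg, if_false]
        exact tendsto_const_nhds
      · -- injective, image ≠ Icc 1 i : ratio → 0
        have hinj : Function.Injective r := by
          by_contra hni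
          exact hVd (vd_eq_zero_of_not_inj lam r hni)
        set g : ℕ → ℝ := fun l => (∏ a : Fin i, (1 + δ l / lam (r a))) /
            ∏ j ∈ Finset.Icc 1 i, (1 + δ l / lam j) with hg
        have hgpos : ∀ l, 0 < g l := by
          intro l
          refine div_pos (Finset.prod_pos fun a _ => hfacpos l (r a) (hrmem a))
            (Finset.prod_pos fun j hj => hfacpos l j (Finset.Icc_subset_Icc le_rfl hi hj))
        have hratio : ∀ n' : ℕ, (∏ a : Fin i, Qp lam δ (r a) n') / GG lam δ i n'
            = ∏ l ∈ Finset.range n', g l := by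
          intro n'
          have h1 : (∏ a : Fin i, Qp lam δ (r a) n')
              = ∏ l ∈ Finset.range n', ∏ a : Fin i, (1 + δ l / lam (r a)) := by
            simp only [Qp]
            exact Finset.prod_comm
          have h2 : GG lam δ i n'
              = ∏ l ∈ Finset.range n', ∏ j ∈ Finset.Icc 1 i, (1 + δ l / lam j) := by
            simp only [GG, Qp]
            exact Finset.prod_comm
          rw [h1, h2, ← Finset.prod_div_distrib]
        -- limit of g
        have hnum : Tendsto (fun l => ∏ a : Fin i, (1 + δ l / lam (r a))) atTop
            (nhds (∏ a : Fin i, qf (r a))) := by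
          refine tendsto_finset_prod _ fun a _ => ?_
          exact tendsto_const_nhds.add (hδlim.div_const _)
        have hden : Tendsto (fun l => ∏ j ∈ Finset.Icc 1 i, (1 + δ l / lam j)) atTop
            (nhds (∏ j ∈ Finset.Icc 1 i, qf j)) := by
          refine tendsto_finset_prod _ fun j _ => ?_
          exact tendsto_const_nhds.add (hδlim.div_const _)
        have hdenpos : 0 < ∏ j ∈ Finset.Icc 1 i, qf j :=
          Finset.prod_pos fun j hj => hqpos j (Finset.mem_Icc.1 hj).1
            (le_trans (Finset.mem_Icc.1 hj).2 hi)
        have hglim : Tendsto g atTop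
            (nhds ((∏ a : Fin i, qf (r a)) / ∏ j ∈ Finset.Icc 1 i, qf j)) :=
          hnum.div hden hdenpos.ne'
        -- the limit is < 1
        have himsub : Finset.image r Finset.univ ⊆ Finset.Icc 1 N := by
          intro x hx
          obtain ⟨a, _, rfl⟩ := Finset.mem_image.1 hx
          exact hrmem a
        have himcard : (Finset.image r Finset.univ).card = i := by
          rw [Finset.card_image_of_injective _ hinj]
          simp
        have hprodlt : (∏ j ∈ Finset.image r Finset.univ, qf j) < ∏ j ∈ Finset.Icc 1 i, qf j :=
          (prod_subset_lt N qf hqpos hqstrict i _ himsub himcard).2 himg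
        have hlt1 : (∏ a : Fin i, qf (r a)) / (∏ j ∈ Finset.Icc 1 i, qf j) < 1 := by
          rw [div_lt_one hdenpos, prod_comp_inj r hinj qf]
          exact hprodlt
        have h0 : Tendsto (fun n : ℕ => ∏ l ∈ Finset.range n, g l) atTop (nhds 0) :=
          prod_tendsto_zero g hgpos _ hlt1 hglim
        have h0' : Tendsto (fun n : ℕ => ∏ l ∈ Finset.range (n + u), g l) atTop (nhds 0) := by
          have := h0.comp (tendsto_add_atTop_nat u)
          exact this
        have heq : (fun n : ℕ => E r * ((∏ a : Fin i, Qp lam δ (r a) (n + u)) / GG lam δ i (n + u)))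
            = fun n : ℕ => E r * ∏ l ∈ Finset.range (n + u), g l := by
          funext n; rw [hratio (n + u)]
        rw [heq, hL]
        simp only [himg, if_neg, if_false]
        simpa using tendsto_const_nhds.mul h0'
  -- Step D : the sum of limits is KK
  have hsum : (∑ r ∈ Fintype.piFinset (fun _ : Fin i => Finset.Icc 1 N), L r)
      = KK lam c i (t + u) := by
    have hKK : KK lam c i (t + u)
        = ∑ r ∈ Fintype.piFinset (fun _ : Fin i => Finset.Icc 1 i), E r := by
      rw [KK, hankel_expand i lam (fun j => c j * lam j ^ (t + u))]
    rw [hKK]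
    have hsub : Fintype.piFinset (fun _ : Fin i => Finset.Icc 1 i)
        ⊆ Fintype.piFinset (fun _ : Fin i => Finset.Icc 1 N) :=
      Fintype.piFinset_subset _ _ fun _ => Finset.Icc_subset_Icc le_rfl hi
    rw [← Finset.sum_subset hsub ?h1]
    · refine Finset.sum_congr rfl fun r hr => ?_
      by_cases himg : Finset.image r Finset.univ = Finset.Icc 1 i
      · rw [hL]; simp only [himg, if_pos]
      · have hni : ¬ Function.Injective r := by
          intro hinj
          apply himg
          apply Finset.eq_of_subset_of_card_le
          · intro x hx
            obtain ⟨a, _, rfl⟩ := Finset.mem_image.1 hx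
            exact (Fintype.mem_piFinset.1 hr) a
          · rw [Finset.card_image_of_injective _ hinj]
            simp [Nat.card_Icc]
        have hE0 : E r = 0 := by rw [hE]; simp [vd_eq_zero_of_not_inj lam r hni]
        rw [hL]
        simp [hE0]
    · intro r hr hnr
      have : ∃ a, r a ∉ Finset.Icc 1 i := by
        by_contra hcon
        push_neg at hcon
        exact hnr (Fintype.mem_piFinset.2 hcon)
      obtain ⟨a, ha⟩ := this
      have himg : Finset.image r Finset.univ ≠ Finset.Icc 1 i := by
        intro hcontra
        exact ha (hcontra ▸ Finset.mem_image_of_mem r (Finset.mem_univ a))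
      rw [hL]
      simp [himg]
  rw [show (fun n : ℕ => tauH N lam c δ i (-(n : ℤ) + t) (n + u) / GG lam δ i (n + u))
      = (fun n : ℕ => ∑ r ∈ Fintype.piFinset (fun _ : Fin i => Finset.Icc 1 N),
          E r * ((∏ a : Fin i, Qp lam δ (r a) (n + u)) / GG lam δ i (n + u))) from funext hfun,
    ← hsum]
  exact hmain
lemma tau_pos (N : ℕ) (lam c : ℕ → ℝ) (δ : ℕ → ℝ)
    (hlampos : ∀ j ∈ Finset.Icc 1 N, 0 < lam j)
    (hdist : ∀ j ∈ Finset.Icc 1 N, ∀ k ∈ Finset.Icc 1 N, j ≠ k → lam j ≠ lam k)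
    (hcpos : ∀ j ∈ Finset.Icc 1 N, 0 < c j)
    (hδmin : ∀ n : ℕ, ∀ j ∈ Finset.Icc 1 N, -lam j < δ n)
    (i : ℕ) (hi : i ≤ N) (s : ℤ) (n : ℕ) : 0 < tauH N lam c δ i s n := by
  rw [tauH]
  have hmat : (Matrix.of fun a b : Fin i => mom N lam c δ (a.1 + b.1) s n)
      = Matrix.of fun a b : Fin i => ∑ j ∈ Finset.Icc 1 N,
          (c j * lam j ^ s * ∏ l ∈ Finset.range n, (lam j + δ l)) * lam j ^ (a.1 + b.1) := by
    ext a b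
    simp only [Matrix.of_apply, mom]
    refine Finset.sum_congr rfl fun j hj => ?_
    have hlamj := hlampos j hj
    rw [zpow_add₀ hlamj.ne', zpow_natCast]
    ring
  rw [hmat]
  refine hankel_det_pos N i hi lam _ hlampos hdist fun j hj => ?_
  have hlamj := hlampos j hj
  refine mul_pos (mul_pos (hcpos j hj) (zpow_pos hlamj s)) (Finset.prod_pos fun l _ => ?_)
  have := hδmin l j hj
  linarith

noncomputable def nuF (N : ℕ) (lam c : ℕ → ℝ) (δ : ℕ → ℝ) (k t u : ℕ) : ℕ → ℝ :=
  fun n => tauH N lam c δ k (-(n : ℤ) + t) (n + u) / GG lam δ k (n + u)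

noncomputable def AF (N : ℕ) (lam c : ℕ → ℝ) (δ : ℕ → ℝ) (i : ℕ) : ℕ → ℝ := fun n =>
  nuF N lam c δ i 0 0 n * nuF N lam c δ (i - 1) 0 1 n /
    (nuF N lam c δ (i - 1) 1 0 n * nuF N lam c δ (i - 1) 1 1 n)

theorem stmt19 (N : ℕ) (hN : 1 ≤ N) (lam c : ℕ → ℝ) (δ : ℕ → ℝ) (δs : ℝ)
    (hlampos : ∀ j ∈ Finset.Icc 1 N, 0 < lam j)
    (hdist : ∀ j ∈ Finset.Icc 1 N, ∀ k ∈ Finset.Icc 1 N, j ≠ k → lam j ≠ lam k)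
    (hcpos : ∀ j ∈ Finset.Icc 1 N, 0 < c j)
    (hδmin : ∀ n : ℕ, ∀ j ∈ Finset.Icc 1 N, -lam j < δ n)
    (hδlim : Tendsto δ atTop (nhds δs))
    (hchain : ∀ j, 1 ≤ j → j < N → 1 + δs / lam (j + 1) < 1 + δs / lam j)
    (hlast : 0 < 1 + δs / lam N) :
    (∀ i, 1 ≤ i → i ≤ N →
      Tendsto (fun n : ℕ => pn N lam c δ i n) atTop (nhds (1 / lam i))) ∧
    (∀ i, 1 ≤ i → i ≤ N →
      Tendsto (fun n : ℕ => xn N lam c δ i (n + 1) - xn N lam c δ i n) atTop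
        (nhds (Real.log (1 + δs / lam i)))) ∧
    (∀ i, 1 ≤ i → i ≤ N - 1 →
      Tendsto (fun n : ℕ => xn N lam c δ (i + 1) n - xn N lam c δ i n) atTop atBot) := by
  classical
  have hsub : ∀ k, k ≤ N → Finset.Icc 1 k ⊆ Finset.Icc 1 N :=
    fun k hk => Finset.Icc_subset_Icc le_rfl hk
  have hfac : ∀ (l : ℕ) (j : ℕ), j ∈ Finset.Icc 1 N → 0 < 1 + δ l / lam j := by
    intro l j hj
    have h1 := hlampos j hj
    have h2 := hδmin l j hj
    have hrw : 1 + δ l / lam j = (lam j + δ l) / lam j := by rw [add_div, div_self h1.ne']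
    rw [hrw]
    exact div_pos (by linarith) h1
  have hQppos : ∀ j ∈ Finset.Icc 1 N, ∀ n, 0 < Qp lam δ j n := fun j hj n =>
    Finset.prod_pos fun l _ => hfac l j hj
  have hGGpos : ∀ k, k ≤ N → ∀ n, 0 < GG lam δ k n := fun k hk n =>
    Finset.prod_pos fun j hj => hQppos j (hsub k hk hj) n
  have htaupos : ∀ k, k ≤ N → ∀ (s : ℤ) (n : ℕ), 0 < tauH N lam c δ k s n :=
    fun k hk s n => tau_pos N lam c δ hlampos hdist hcpos hδmin k hk s n
  have hKpos : ∀ k, k ≤ N → ∀ m, 0 < KK lam c k m := fun k hk m =>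
    KK_pos N lam c k m hk hlampos hdist hcpos
  have hnu : ∀ k t u, k ≤ N → Tendsto (nuF N lam c δ k t u) atTop (nhds (KK lam c k (t + u))) :=
    fun k t u hk => nu_tendsto N lam c δ δs hlampos hcpos hδmin hδlim hchain hlast k t u hk
  have hnupos : ∀ k, k ≤ N → ∀ t u n, 0 < nuF N lam c δ k t u n := fun k hk t u n =>
    div_pos (htaupos k hk _ _) (hGGpos k hk _)
  have hqmono : ∀ j k, 1 ≤ j → j ≤ k → k ≤ N → 1 + δs / lam k ≤ 1 + δs / lam j := by
    intro j k hj hjk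
    induction k, hjk using Nat.le_induction with
    | base => intro _; exact le_rfl
    | succ k hk ih =>
      intro hkN
      exact le_trans (hchain k (by omega) (by omega)).le (ih (by omega))
  have hqipos : ∀ i, 1 ≤ i → i ≤ N → 0 < 1 + δs / lam i := fun i h1 hiN =>
    lt_of_lt_of_le hlast (hqmono i N h1 hiN le_rfl)
  have hGsplit : ∀ i, 1 ≤ i → ∀ n, GG lam δ i n = GG lam δ (i - 1) n * Qp lam δ i n := by
    intro i h1 n
    have hIcc : Finset.Icc 1 i = insert i (Finset.Icc 1 (i - 1)) := by
      ext x
      simp only [Finset.mem_Icc, Finset.mem_insert]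
      omega
    have hnotmem : i ∉ Finset.Icc 1 (i - 1) := by
      simp only [Finset.mem_Icc]
      omega
    rw [GG, GG, hIcc, Finset.prod_insert hnotmem]
    ring
  have hAFpos : ∀ i, 1 ≤ i → i ≤ N → ∀ n, 0 < AF N lam c δ i n := by
    intro i h1 hiN n
    have h1' : i - 1 ≤ N := by omega
    exact div_pos (mul_pos (hnupos i hiN 0 0 n) (hnupos (i - 1) h1' 0 1 n))
      (mul_pos (hnupos (i - 1) h1' 1 0 n) (hnupos (i - 1) h1' 1 1 n))
  have hCpos : ∀ i, 1 ≤ i → i ≤ N →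
      0 < KK lam c i 0 * KK lam c (i - 1) 1 / (KK lam c (i - 1) 1 * KK lam c (i - 1) 2) := by
    intro i h1 hiN
    have h1' : i - 1 ≤ N := by omega
    exact div_pos (mul_pos (hKpos i hiN 0) (hKpos (i - 1) h1' 1))
      (mul_pos (hKpos (i - 1) h1' 1) (hKpos (i - 1) h1' 2))
  have hAFlim : ∀ i, 1 ≤ i → i ≤ N → Tendsto (AF N lam c δ i) atTop
      (nhds (KK lam c i 0 * KK lam c (i - 1) 1 / (KK lam c (i - 1) 1 * KK lam c (i - 1) 2))) := by
    intro i h1 hiN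
    have h1' : i - 1 ≤ N := by omega
    exact ((hnu i 0 0 hiN).mul (hnu (i - 1) 0 1 h1')).div
      ((hnu (i - 1) 1 0 h1').mul (hnu (i - 1) 1 1 h1'))
      (mul_pos (hKpos (i - 1) h1' 1) (hKpos (i - 1) h1' 2)).ne'
  have hxn_eq : ∀ i, 1 ≤ i → i ≤ N → ∀ n,
      xn N lam c δ i n = Real.log (AF N lam c δ i n * Qp lam δ i n) := by
    intro i h1 hiN n
    have h1' : i - 1 ≤ N := by omega
    have hg1 := (hGGpos (i - 1) h1' n).ne'
    have hg2 := (hGGpos (i - 1) h1' (n + 1)).ne'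
    have hqp := (hQppos i (Finset.mem_Icc.2 ⟨h1, hiN⟩) n).ne'
    have ht3 := (htaupos (i - 1) h1' (-(n : ℤ) + 1) n).ne'
    have ht4 := (htaupos (i - 1) h1' (-(n : ℤ) + 1) (n + 1)).ne'
    rw [xn]
    congr 1
    simp only [AF, nuF, Nat.cast_zero, add_zero, Nat.cast_one]
    rw [hGsplit i h1 n]
    field_simp
  refine ⟨?_, ?_, ?_⟩
  · -- part (a)
    intro i h1 hiN
    have h1' : i - 1 ≤ N := by omega
    have hpn_eq : ∀ n : ℕ, pn N lam c δ i n
        = nuF N lam c δ i 0 0 n * nuF N lam c δ (i - 1) 1 1 n /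
            (nuF N lam c δ (i - 1) 0 1 n * nuF N lam c δ i 1 0 n) := by
      intro n
      have ht3 := (htaupos (i - 1) h1' (-(n : ℤ)) (n + 1)).ne'
      have ht4 := (htaupos i hiN (-(n : ℤ) + 1) n).ne'
      have hg1 := (hGGpos i hiN n).ne'
      have hg2 := (hGGpos (i - 1) h1' (n + 1)).ne'
      simp only [pn, nuF, Nat.cast_zero, add_zero, Nat.cast_one]
      field_simp
    have hlim := ((hnu i 0 0 hiN).mul (hnu (i - 1) 1 1 h1')).div
      ((hnu (i - 1) 0 1 h1').mul (hnu i 1 0 hiN))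
      (mul_pos (hKpos (i - 1) h1' 1) (hKpos i hiN 1)).ne'
    have hval : KK lam c i 0 * KK lam c (i - 1) 2 / (KK lam c (i - 1) 1 * KK lam c i 1)
        = 1 / lam i := by
      have hΛA : 0 < ∏ j ∈ Finset.Icc 1 (i - 1), lam j :=
        Finset.prod_pos fun j hj => hlampos j (hsub (i - 1) h1' hj)
      have hlami : 0 < lam i := hlampos i (Finset.mem_Icc.2 ⟨h1, hiN⟩)
      have hK1 := (hKpos i hiN 0).ne'
      have hK2 := (hKpos (i - 1) h1' 0).ne'
      rw [KK_scale lam c (i - 1) 2, KK_scale lam c (i - 1) 1, KK_scale lam c i 1]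
      have hIcc : Finset.Icc 1 i = insert i (Finset.Icc 1 (i - 1)) := by
        ext x
        simp only [Finset.mem_Icc, Finset.mem_insert]
        omega
      have hnotmem : i ∉ Finset.Icc 1 (i - 1) := by
        simp only [Finset.mem_Icc]; omega
      rw [hIcc, Finset.prod_insert hnotmem]
      simp only [pow_one]
      rw [show (∏ j ∈ Finset.Icc 1 (i - 1), lam j ^ 2)
          = (∏ j ∈ Finset.Icc 1 (i - 1), lam j) ^ 2 from by rw [Finset.prod_pow]]
      field_simp
    rw [hval] at hlim
    exact hlim.congr fun n => (hpn_eq n).symm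
  · -- part (b)
    intro i h1 hiN
    have hmemi : i ∈ Finset.Icc 1 N := Finset.mem_Icc.2 ⟨h1, hiN⟩
    have hC := hCpos i h1 hiN
    have hlogA : Tendsto (fun n => Real.log (AF N lam c δ i n)) atTop
        (nhds (Real.log (KK lam c i 0 * KK lam c (i - 1) 1 /
          (KK lam c (i - 1) 1 * KK lam c (i - 1) 2)))) :=
      (hAFlim i h1 hiN).log hC.ne'
    have heq : ∀ n, xn N lam c δ i (n + 1) - xn N lam c δ i n
        = (Real.log (AF N lam c δ i (n + 1)) - Real.log (AF N lam c δ i n))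
            + Real.log (1 + δ n / lam i) := by
      intro n
      rw [hxn_eq i h1 hiN (n + 1), hxn_eq i h1 hiN n]
      have hQsucc : Qp lam δ i (n + 1) = Qp lam δ i n * (1 + δ n / lam i) :=
        Finset.prod_range_succ _ n
      rw [Real.log_mul (hAFpos i h1 hiN (n + 1)).ne' (hQppos i hmemi (n + 1)).ne',
        Real.log_mul (hAFpos i h1 hiN n).ne' (hQppos i hmemi n).ne', hQsucc,
        Real.log_mul (hQppos i hmemi n).ne' (hfac n i hmemi).ne']
      ring
    have h₁ : Tendsto (fun n => Real.log (AF N lam c δ i (n + 1))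
        - Real.log (AF N lam c δ i n)) atTop (nhds 0) := by
      have := (hlogA.comp (tendsto_add_atTop_nat 1)).sub hlogA
      simpa using this
    have h₂ : Tendsto (fun n => Real.log (1 + δ n / lam i)) atTop
        (nhds (Real.log (1 + δs / lam i))) :=
      (tendsto_const_nhds.add (hδlim.div_const _)).log (hqipos i h1 hiN).ne'
    have hcomb := h₁.add h₂
    rw [zero_add] at hcomb
    exact hcomb.congr fun n => (heq n).symm
  · -- part (c)
    intro i h1 hiN1
    have hiN : i ≤ N := by omega
    have hi1N : i + 1 ≤ N := by omega
    have h11 : 1 ≤ i + 1 := by omega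
    have hmemi : i ∈ Finset.Icc 1 N := Finset.mem_Icc.2 ⟨h1, hiN⟩
    have hmemi1 : i + 1 ∈ Finset.Icc 1 N := Finset.mem_Icc.2 ⟨h11, hi1N⟩
    set B : ℕ → ℝ := fun n =>
      AF N lam c δ (i + 1) n * Qp lam δ (i + 1) n / (AF N lam c δ i n * Qp lam δ i n) with hB
    have hBpos : ∀ n, 0 < B n := fun n =>
      div_pos (mul_pos (hAFpos (i + 1) h11 hi1N n) (hQppos (i + 1) hmemi1 n))
        (mul_pos (hAFpos i h1 hiN n) (hQppos i hmemi n))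
    have hdiffeq : ∀ n, xn N lam c δ (i + 1) n - xn N lam c δ i n = Real.log (B n) := by
      intro n
      rw [hxn_eq (i + 1) h11 hi1N n, hxn_eq i h1 hiN n,
        ← Real.log_div (mul_pos (hAFpos (i + 1) h11 hi1N n) (hQppos (i + 1) hmemi1 n)).ne'
          (mul_pos (hAFpos i h1 hiN n) (hQppos i hmemi n)).ne']
    have hQr : Tendsto (fun n => Qp lam δ (i + 1) n / Qp lam δ i n) atTop (nhds 0) := by
      have hfeq : ∀ n, Qp lam δ (i + 1) n / Qp lam δ i n
          = ∏ l ∈ Finset.range n, ((1 + δ l / lam (i + 1)) / (1 + δ l / lam i)) := fun n => by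
        rw [Qp, Qp, ← Finset.prod_div_distrib]
      have hfpos : ∀ l, 0 < (1 + δ l / lam (i + 1)) / (1 + δ l / lam i) := fun l =>
        div_pos (hfac l _ hmemi1) (hfac l _ hmemi)
      have hflim : Tendsto (fun l => (1 + δ l / lam (i + 1)) / (1 + δ l / lam i)) atTop
          (nhds ((1 + δs / lam (i + 1)) / (1 + δs / lam i))) :=
        (tendsto_const_nhds.add (hδlim.div_const _)).div
          (tendsto_const_nhds.add (hδlim.div_const _)) (hqipos i h1 hiN).ne'
      have hlt1 : (1 + δs / lam (i + 1)) / (1 + δs / lam i) < 1 :=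
        (div_lt_one (hqipos i h1 hiN)).2 (hchain i h1 (by omega))
      have := prod_tendsto_zero _ hfpos _ hlt1 hflim
      exact this.congr fun n => (hfeq n).symm
    have hB0 : Tendsto B atTop (nhds 0) := by
      have hre : ∀ n, B n = (AF N lam c δ (i + 1) n / AF N lam c δ i n)
          * (Qp lam δ (i + 1) n / Qp lam δ i n) := fun n => by
        rw [hB, div_mul_div_comm]
      have hAr : Tendsto (fun n => AF N lam c δ (i + 1) n / AF N lam c δ i n) atTop
          (nhds ((KK lam c (i + 1) 0 * KK lam c ((i + 1) - 1) 1 /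
              (KK lam c ((i + 1) - 1) 1 * KK lam c ((i + 1) - 1) 2)) /
            (KK lam c i 0 * KK lam c (i - 1) 1 / (KK lam c (i - 1) 1 * KK lam c (i - 1) 2)))) :=
        (hAFlim (i + 1) h11 hi1N).div (hAFlim i h1 hiN) (hCpos i h1 hiN).ne'
      have hcomb := hAr.mul hQr
      rw [mul_zero] at hcomb
      exact hcomb.congr fun n => (hre n).symm
    have hcompose : Tendsto (fun n => Real.log (B n)) atTop atBot := by
      have hmem : Tendsto B atTop (nhdsWithin 0 (Set.Ioi 0)) :=
        tendsto_nhdsWithin_of_tendsto_nhds_of_eventually_within _ hB0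
          (Eventually.of_forall fun n => hBpos n)
      exact Real.tendsto_log_nhdsGT_zero.comp hmem
    exact hcompose.congr fun n => (hdiffeq n).symm
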